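/- Let F ∈ ℂ[x_0,x_1,x_2] be a homogeneous polynomial of degree 4, let L ∈ ℂ[x_0,x_1,x_2] be a nonzero homogeneous linear form, and let p_1, p_2, p_3 ∈ ℂ^3 be nonzero vectors, pairwise non-proportional, such that L(p_i) = 0 for all i and such that all three partial derivatives of F vanish at each p_i (i.e., each p_i is a singular point of the quartic curve F = 0 lying on the line L = 0). Then L divides F in ℂ[x_0,x_1,x_2]. -/

import Mathlib

open MvPolynomial

section Aux

private lemma eval_smul_hom {n : ℕ} (φ : MvPolynomial (Fin 3) ℂ) (hφ : φ.IsHomogeneous n)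
    (c : ℂ) (x : Fin 3 → ℂ) : eval (c • x) φ = c ^ n * eval x φ := by
  rw [eval_eq, eval_eq, Finset.mul_sum]
  apply Finset.sum_congr rfl
  intro d hd
  have hdeg : d.degree = n := by
    rw [Finsupp.degree_eq_weight_one]; exact hφ (mem_support_iff.mp hd)
  have : ∏ i ∈ d.support, (c • x) i ^ d i = c ^ n * ∏ i ∈ d.support, x i ^ d i := by
    simp only [Pi.smul_apply, smul_eq_mul, mul_pow]
    rw [Finset.prod_mul_distrib, Finset.prod_pow_eq_pow_sum]
    rw [← hdeg]; rfl
  rw [this]; ring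

private lemma derivative_aeval_mv (v : Fin 3 → Polynomial ℂ) (φ : MvPolynomial (Fin 3) ℂ) :
    Polynomial.derivative (aeval v φ) =
      ∑ j, Polynomial.derivative (v j) * aeval v (pderiv j φ) := by
  induction φ using MvPolynomial.induction_on with
  | C a => simp
  | add p q hp hq =>
      simp only [map_add, hp, hq, ← Finset.sum_add_distrib, mul_add]
  | mul_X p i hp =>
      classical
      simp only [map_mul, aeval_X, Polynomial.derivative_mul, hp, pderiv_mul, pderiv_X]
      simp only [map_add, map_mul, aeval_X, mul_add, Finset.sum_add_distrib,
        Finset.sum_mul, Pi.single_apply]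
      refine congrArg₂ (· + ·) ?_ ?_
      · apply Finset.sum_congr rfl; intros; ring
      · rw [Finset.sum_eq_single i] <;> simp +contextual [eq_comm, mul_comm]

private lemma eval_polyeval (v : Fin 3 → Polynomial ℂ) (φ : MvPolynomial (Fin 3) ℂ) (t : ℂ) :
    Polynomial.eval t (aeval v φ) = eval (fun j => (v j).eval t) φ := by
  have h := MvPolynomial.comp_aeval (f := v) (φ := Polynomial.aeval t)
  have h2 := congrArg (fun ψ => ψ φ) h
  simp only [AlgHom.coe_comp, Function.comp_apply] at h2
  rw [Polynomial.coe_aeval_eq_eval] at h2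
  rw [h2]; rfl

private lemma eval_aeval_mv (v : Fin 3 → MvPolynomial (Fin 3) ℂ) (φ : MvPolynomial (Fin 3) ℂ)
    (x : Fin 3 → ℂ) :
    eval x (aeval v φ) = eval (fun j => eval x (v j)) φ := by
  have h := MvPolynomial.comp_aeval (f := v) (φ := (MvPolynomial.aeval x :
    MvPolynomial (Fin 3) ℂ →ₐ[ℂ] ℂ))
  have h2 := congrArg (fun ψ => ψ φ) h
  simp only [AlgHom.coe_comp, Function.comp_apply] at h2
  exact h2

private lemma euler_point {n : ℕ} (φ : MvPolynomial (Fin 3) ℂ) (hφ : φ.IsHomogeneous n)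
    (x : Fin 3 → ℂ) :
    (n : ℂ) * eval x φ = ∑ j, x j * eval x (pderiv j φ) := by
  have hh : aeval (fun j => Polynomial.C (x j) * Polynomial.X) φ
      = Polynomial.C (eval x φ) * Polynomial.X ^ n := by
    apply Polynomial.funext
    intro t
    rw [eval_polyeval]
    have h3 : (fun j => (Polynomial.C (x j) * Polynomial.X).eval t) = t • x := by
      funext j
      simp only [Polynomial.eval_mul, Polynomial.eval_C, Polynomial.eval_X, Pi.smul_apply,
        smul_eq_mul]
      ring
    rw [h3, eval_smul_hom φ hφ]
    simp only [Polynomial.eval_mul, Polynomial.eval_C, Polynomial.eval_pow, Polynomial.eval_X]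
    ring
  have hd := derivative_aeval_mv (fun j => Polynomial.C (x j) * Polynomial.X) φ
  rw [hh] at hd
  rw [show ((n:ℂ) * eval x φ) = Polynomial.eval 1 (Polynomial.derivative
      (Polynomial.C (eval x φ) * Polynomial.X ^ n)) by simp [Polynomial.derivative_X_pow]; ring]
  rw [hd, Polynomial.eval_finset_sum]
  apply Finset.sum_congr rfl
  intro j _
  simp only [Polynomial.derivative_mul, Polynomial.derivative_C, Polynomial.derivative_X,
    zero_mul, mul_one, zero_add, Polynomial.eval_mul, Polynomial.eval_C]
  rw [eval_polyeval]
  rw [show (fun i => Polynomial.eval 1 (Polynomial.C (x i) * Polynomial.X)) = x from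
    funext fun i => by simp]

private lemma pderiv_homog {n : ℕ} (φ : MvPolynomial (Fin 3) ℂ) (hφ : φ.IsHomogeneous n)
    (i : Fin 3) : (pderiv i φ).IsHomogeneous (n - 1) := by
  classical
  rw [← support_sum_monomial_coeff φ, map_sum]
  apply MvPolynomial.IsHomogeneous.sum
  intro d hd
  rw [pderiv_monomial]
  rcases Nat.eq_zero_or_pos (d i) with h0 | h0
  · rw [h0]; simp only [Nat.cast_zero, mul_zero, monomial_zero]
    exact isHomogeneous_zero _ _ _
  · apply isHomogeneous_monomial
    have hdd : d.degree = n := by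
      rw [Finsupp.degree_eq_weight_one]; exact hφ (mem_support_iff.mp hd)
    have h1 : (d - Finsupp.single i 1) + Finsupp.single i 1 = d := by
      ext j
      by_cases hji : j = i
      · subst hji; simp [Nat.sub_add_cancel h0]
      · simp [Finsupp.single_apply, Ne.symm hji, hji]
    have h2 : (d - Finsupp.single i 1).degree + (Finsupp.single i 1).degree = d.degree := by
      rw [← h1]
      simp [Finsupp.degree_eq_weight_one, map_add]
    have h3 : (Finsupp.single i 1).degree = 1 := by
      rw [Finsupp.degree_apply, Finsupp.support_single_ne_zero i one_ne_zero]; simp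
    omega

/-- a polynomial with a double root -/
private lemma sq_dvd_of_double_root (p : Polynomial ℂ) (a : ℂ) (h0 : p.eval a = 0)
    (h1 : p.derivative.eval a = 0) : (Polynomial.X - Polynomial.C a) ^ 2 ∣ p := by
  obtain ⟨q, rfl⟩ := (Polynomial.dvd_iff_isRoot.mpr h0)
  have hq : q.eval a = 0 := by
    have := h1
    simp only [Polynomial.derivative_mul, Polynomial.derivative_sub, Polynomial.derivative_X,
      Polynomial.derivative_C, sub_zero, one_mul, Polynomial.eval_add, Polynomial.eval_mul,
      Polynomial.eval_sub, Polynomial.eval_X, Polynomial.eval_C, sub_self, zero_mul] at this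
    simpa using this
  obtain ⟨u, rfl⟩ := (Polynomial.dvd_iff_isRoot.mpr hq)
  exact ⟨u, by ring⟩

private lemma natDegree_aeval_le {n : ℕ} (φ : MvPolynomial (Fin 3) ℂ) (hφ : φ.IsHomogeneous n)
    (v : Fin 3 → Polynomial ℂ) (hv : ∀ j, (v j).natDegree ≤ 1) :
    (aeval v φ).natDegree ≤ n := by
  rw [aeval_def, eval₂_eq]
  apply Polynomial.natDegree_sum_le_of_forall_le
  intro d hd
  have hdd : d.degree = n := by
    rw [Finsupp.degree_eq_weight_one]; exact hφ (mem_support_iff.mp hd)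
  calc (algebraMap ℂ (Polynomial ℂ) (coeff d φ) * ∏ i ∈ d.support, v i ^ d i).natDegree
      ≤ (algebraMap ℂ (Polynomial ℂ) (coeff d φ)).natDegree
        + (∏ i ∈ d.support, v i ^ d i).natDegree := Polynomial.natDegree_mul_le
    _ ≤ 0 + (∏ i ∈ d.support, v i ^ d i).natDegree := by
        simp [Polynomial.natDegree_C]
    _ ≤ ∑ i ∈ d.support, (v i ^ d i).natDegree := by
        rw [zero_add]; exact Polynomial.natDegree_prod_le _ _
    _ ≤ ∑ i ∈ d.support, d i * 1 := by
        apply Finset.sum_le_sum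
        intro i _
        exact le_trans (Polynomial.natDegree_pow_le) (Nat.mul_le_mul_left _ (hv i))
    _ = d.degree := by simp [Finsupp.degree_apply]
    _ = n := hdd

end Aux

set_option maxHeartbeats 1600000 in
/-- Three pairwise non-proportional singular points of a plane quartic lying
on a line force that line to be a component: if `F` is a homogeneous quartic,
`L ≠ 0` a homogeneous linear form vanishing at three nonzero, pairwise
non-proportional points `p₁, p₂, p₃` at which all partial derivatives of `F`
vanish, then `L ∣ F`. -/
theorem line_through_three_singular_points_divides_quartic
    (F L : MvPolynomial (Fin 3) ℂ)
    (hF : F.IsHomogeneous 4) (hL : L.IsHomogeneous 1) (hL0 : L ≠ 0)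
    (p₁ p₂ p₃ : Fin 3 → ℂ)
    (hp₁ : p₁ ≠ 0) (hp₂ : p₂ ≠ 0) (hp₃ : p₃ ≠ 0)
    (h₁₂ : ∀ c : ℂ, p₁ ≠ c • p₂) (h₁₃ : ∀ c : ℂ, p₁ ≠ c • p₃)
    (h₂₃ : ∀ c : ℂ, p₂ ≠ c • p₃)
    (hLp : eval p₁ L = 0 ∧ eval p₂ L = 0 ∧ eval p₃ L = 0)
    (hsing : ∀ j : Fin 3,
      eval p₁ (pderiv j F) = 0 ∧ eval p₂ (pderiv j F) = 0 ∧ eval p₃ (pderiv j F) = 0) :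
    L ∣ F := by
  classical
  -- the coefficients of the linear form
  set c : Fin 3 → ℂ := fun j => coeff (Finsupp.single j 1) L with hc
  -- decomposition of L
  have hdec : L = ∑ j, C (c j) * X j := by
    apply MvPolynomial.ext
    intro d
    rw [coeff_sum]
    simp only [coeff_C_mul, coeff_X']
    by_cases hd : ∃ j, Finsupp.single j 1 = d
    · obtain ⟨j, rfl⟩ := hd
      rw [Finset.sum_eq_single j]
      · simp [hc]
      · intro m _ hmj
        rw [if_neg, mul_zero]
        intro hs
        exact hmj (Finsupp.single_left_injective one_ne_zero hs)
      · simp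
    · push_neg at hd
      have h1 : coeff d L = 0 := by
        apply hL.coeff_eq_zero
        intro hdeg
        -- d.degree = 1 implies d is a single
        rw [Finsupp.degree_eq_weight_one] at hdeg
        have hsum : d 0 + d 1 + d 2 = 1 := by
          have h9 : ∑ i, d i = 1 := by
            rw [show (∑ i, d i) = Finsupp.weight 1 d by
              rw [show (Finsupp.weight 1 : (Fin 3 →₀ ℕ) →+ ℕ) = Finsupp.degree from Finsupp.degree_eq_weight_one.symm, Finsupp.degree_apply]
              exact (Finset.sum_subset (Finset.subset_univ d.support)
                (fun i _ hi => Finsupp.notMem_support_iff.mp hi)).symm]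
            exact hdeg
          simpa [Fin.sum_univ_three] using h9
        have : ∃ j : Fin 3, d j = 1 ∧ ∀ i ≠ j, d i = 0 := by
          rcases Nat.eq_zero_or_pos (d 0) with h0 | h0
          · rcases Nat.eq_zero_or_pos (d 1) with h1 | h1
            · exact ⟨2, by omega, fun i hi => by fin_cases i <;> simp_all <;> omega⟩
            · exact ⟨1, by omega, fun i hi => by fin_cases i <;> simp_all <;> omega⟩
          · exact ⟨0, by omega, fun i hi => by fin_cases i <;> simp_all <;> omega⟩
        obtain ⟨j, hj1, hj0⟩ := this
        apply hd j
        ext i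
        by_cases hij : i = j
        · subst hij; simp [Finsupp.single_apply, hj1]
        · simp [Finsupp.single_apply, Ne.symm hij, hj0 i hij]
      rw [h1]
      apply (Finset.sum_eq_zero _).symm
      intro j _
      rw [if_neg (hd j), mul_zero]
  -- evaluation of L
  have heval : ∀ x : Fin 3 → ℂ, eval x L = ∑ j, c j * x j := by
    intro x
    conv_lhs => rw [hdec]
    simp
  -- some coefficient is nonzero
  have hcne : ∃ k, c k ≠ 0 := by
    by_contra h
    push_neg at h
    apply hL0
    rw [hdec]
    apply Finset.sum_eq_zero
    intro j _
    rw [h j]; simp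
  obtain ⟨k, hk⟩ := hcne
  -- the linear functional
  set φlin : (Fin 3 → ℂ) →ₗ[ℂ] ℂ :=
    { toFun := fun x => ∑ j, c j * x j
      map_add' := by intro a b; simp [mul_add, Finset.sum_add_distrib]
      map_smul' := by
        intro m a
        simp only [Pi.smul_apply, smul_eq_mul, RingHom.id_apply, Finset.mul_sum]
        apply Finset.sum_congr rfl
        intros; ring } with hφlin
  have hφapp : ∀ x, φlin x = ∑ j, c j * x j := fun x => rfl
  -- points in the kernel
  have hker1 : φlin p₁ = 0 := by rw [hφapp, ← heval]; exact hLp.1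
  have hker2 : φlin p₂ = 0 := by rw [hφapp, ← heval]; exact hLp.2.1
  have hker3 : φlin p₃ = 0 := by rw [hφapp, ← heval]; exact hLp.2.2
  -- φlin is surjective
  have hsurj : LinearMap.range φlin = ⊤ := by
    rw [LinearMap.range_eq_top]
    intro a
    refine ⟨Pi.single k ((c k)⁻¹ * a), ?_⟩
    rw [hφapp, Finset.sum_eq_single k]
    · rw [Pi.single_eq_same]
      field_simp
    · intro b _ hbk
      rw [Pi.single_eq_of_ne hbk, mul_zero]
    · simp
  have hkerrank : Module.finrank ℂ (LinearMap.ker φlin) = 2 := by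
    have h1 := LinearMap.finrank_range_add_finrank_ker φlin
    rw [hsurj] at h1
    simp only [finrank_top] at h1
    have h2 : Module.finrank ℂ (Fin 3 → ℂ) = 3 := by simp
    have h3 : Module.finrank ℂ ℂ = 1 := Module.finrank_self ℂ
    omega
  -- p₁, p₂ linearly independent
  have hind : LinearIndependent ℂ ![p₁, p₂] := by
    rw [LinearIndependent.pair_iff]
    intro s t hst
    by_cases hs : s = 0
    · subst hs
      rw [zero_smul, zero_add] at hst
      rcases smul_eq_zero.mp hst with h | h
      · exact ⟨rfl, h⟩
      · exact absurd h hp₂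
    · exfalso
      apply h₁₂ (-(s⁻¹ * t))
      funext i
      have h := congrFun hst i
      simp only [Pi.add_apply, Pi.smul_apply, smul_eq_mul, Pi.zero_apply] at h ⊢
      field_simp
      linear_combination h
  -- the span of p₁, p₂ is the kernel
  have hspan : Submodule.span ℂ (Set.range ![p₁, p₂]) = LinearMap.ker φlin := by
    apply Submodule.eq_of_le_of_finrank_le
    · rw [Submodule.span_le]
      rintro x ⟨i, rfl⟩
      fin_cases i
      · exact hker1
      · exact hker2
    · rw [hkerrank, finrank_span_eq_card hind]
      simp
  have hp3mem : p₃ ∈ Submodule.span ℂ (Set.range ![p₁, p₂]) := by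
    rw [hspan]; exact hker3
  rw [Submodule.mem_span_range_iff_exists_fun] at hp3mem
  obtain ⟨co, hco⟩ := hp3mem
  rw [Fin.sum_univ_two] at hco
  simp only [Matrix.cons_val_zero, Matrix.cons_val_one, Matrix.head_cons] at hco
  set a : ℂ := co 0
  set b : ℂ := co 1
  -- a ≠ 0 and b ≠ 0
  have ha : a ≠ 0 := by
    intro h
    rw [h, zero_smul, zero_add] at hco
    have hb : b ≠ 0 := by
      intro hb; rw [hb, zero_smul] at hco; exact hp₃ hco.symm
    exact h₂₃ b⁻¹ (by rw [← hco, smul_smul]; field_simp; rw [one_smul])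
  have hb : b ≠ 0 := by
    intro h
    rw [h, zero_smul, add_zero] at hco
    exact h₁₃ a⁻¹ (by rw [← hco, smul_smul]; field_simp; rw [one_smul])
  -- F vanishes at the three points (Euler)
  have hFp : ∀ p : Fin 3 → ℂ, (∀ j, eval p (pderiv j F) = 0) → eval p F = 0 := by
    intro p hp
    have := euler_point F hF p
    simp only [hp, mul_zero, Finset.sum_const_zero] at this
    exact (mul_eq_zero.mp this).resolve_left (by norm_num)
  have hF1 : eval p₁ F = 0 := hFp p₁ (fun j => (hsing j).1)
  have hF2 : eval p₂ F = 0 := hFp p₂ (fun j => (hsing j).2.1)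
  have hF3 : eval p₃ F = 0 := hFp p₃ (fun j => (hsing j).2.2)
  -- the restriction to the line through p₁ in direction p₂
  set v : Fin 3 → Polynomial ℂ :=
    fun j => Polynomial.C (p₁ j) + Polynomial.C (p₂ j) * Polynomial.X with hv
  set h : Polynomial ℂ := aeval v F with hh
  have hevalh : ∀ t : ℂ, h.eval t = eval (p₁ + t • p₂) F := by
    intro t
    rw [hh, eval_polyeval, show (fun j => (v j).eval t) = p₁ + t • p₂ from
      funext fun i => by
        simp only [hv, Polynomial.eval_add, Polynomial.eval_mul, Polynomial.eval_C,
          Polynomial.eval_X, Pi.add_apply, Pi.smul_apply, smul_eq_mul]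
        ring]
  have hderivh : ∀ t : ℂ, h.derivative.eval t
      = ∑ j, p₂ j * eval (p₁ + t • p₂) (pderiv j F) := by
    intro t
    rw [hh, derivative_aeval_mv, Polynomial.eval_finset_sum]
    apply Finset.sum_congr rfl
    intro j _
    have hdv : Polynomial.derivative (v j) = Polynomial.C (p₂ j) := by
      simp [hv]
    rw [hdv, Polynomial.eval_mul, Polynomial.eval_C, eval_polyeval]
    rw [show (fun i => (v i).eval t) = p₁ + t • p₂ from funext fun i => by
      simp only [hv, Polynomial.eval_add, Polynomial.eval_mul, Polynomial.eval_C,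
        Polynomial.eval_X, Pi.add_apply, Pi.smul_apply, smul_eq_mul]
      ring]
  -- h has a double root at 0
  have hroot0 : h.eval 0 = 0 := by
    rw [hevalh, show p₁ + (0:ℂ) • p₂ = p₁ by simp]
    exact hF1
  have hroot0' : h.derivative.eval 0 = 0 := by
    rw [hderivh, show p₁ + (0:ℂ) • p₂ = p₁ by simp]
    apply Finset.sum_eq_zero
    intro j _
    rw [(hsing j).1, mul_zero]
  -- h has a double root at r := a⁻¹ * b
  set r : ℂ := a⁻¹ * b with hrdef
  have hr : p₁ + r • p₂ = a⁻¹ • p₃ := by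
    funext i
    have hcoi := congrFun hco i
    simp only [Pi.add_apply, Pi.smul_apply, smul_eq_mul] at hcoi ⊢
    rw [hrdef]
    field_simp
    linear_combination hcoi
  have hrootr : h.eval r = 0 := by
    rw [hevalh, hr, eval_smul_hom F hF, hF3, mul_zero]
  have hrootr' : h.derivative.eval r = 0 := by
    rw [hderivh, hr]
    apply Finset.sum_eq_zero
    intro j _
    rw [eval_smul_hom (pderiv j F) (pderiv_homog F hF j), (hsing j).2.2]
    ring
  have hr0 : r ≠ 0 := by
    rw [hrdef]
    exact mul_ne_zero (inv_ne_zero ha) hb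
  -- the double roots force divisibility
  have hdvd : (Polynomial.X - Polynomial.C (0:ℂ)) ^ 2 * (Polynomial.X - Polynomial.C r) ^ 2
      ∣ h := by
    apply IsCoprime.mul_dvd
    · exact (Polynomial.isCoprime_X_sub_C_of_isUnit_sub (by
        simpa using (isUnit_iff_ne_zero.mpr (neg_ne_zero.mpr hr0)))).pow
    · exact sq_dvd_of_double_root h 0 hroot0 hroot0'
    · exact sq_dvd_of_double_root h r hrootr hrootr'
  -- h must be zero
  have hmain : h = 0 := by
    by_contra hne
    -- degree bounds
    have hdegle : h.natDegree ≤ 4 := by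
      apply natDegree_aeval_le F hF v
      intro j
      refine le_trans (Polynomial.natDegree_add_le _ _) ?_
      simp only [Polynomial.natDegree_C, max_le_iff]
      constructor
      · omega
      · exact le_trans (Polynomial.natDegree_mul_le) (by simp)
    have hq4monic : ((Polynomial.X - Polynomial.C (0:ℂ)) ^ 2
        * (Polynomial.X - Polynomial.C r) ^ 2).Monic :=
      ((Polynomial.monic_X_sub_C 0).pow 2).mul ((Polynomial.monic_X_sub_C r).pow 2)
    have hq4deg : ((Polynomial.X - Polynomial.C (0:ℂ)) ^ 2
        * (Polynomial.X - Polynomial.C r) ^ 2).natDegree = 4 := by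
      rw [((Polynomial.monic_X_sub_C (0:ℂ)).pow 2).natDegree_mul
        ((Polynomial.monic_X_sub_C r).pow 2)]
      simp [Polynomial.natDegree_pow, Polynomial.natDegree_X_sub_C]
    obtain ⟨u, hu⟩ := hdvd
    have hune : u ≠ 0 := by
      intro h0; rw [h0, mul_zero] at hu; exact hne hu
    have hudeg : u.natDegree = 0 := by
      have h1 := Polynomial.natDegree_le_of_dvd ⟨u, hu⟩ hne
      rw [hq4deg] at h1
      have h2 : h.natDegree = ((Polynomial.X - Polynomial.C (0:ℂ)) ^ 2
          * (Polynomial.X - Polynomial.C r) ^ 2).natDegree + u.natDegree := by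
        rw [hu, Polynomial.natDegree_mul (hq4monic.ne_zero) hune]
      omega
    set e : ℂ := u.coeff 0 with hedef
    have hue : u = Polynomial.C e := Polynomial.eq_C_of_natDegree_eq_zero hudeg
    have he0 : e ≠ 0 := by
      intro h0; rw [h0, map_zero] at hue; exact hune hue
    have hevalform : ∀ t : ℂ, h.eval t = t ^ 2 * (t - r) ^ 2 * e := by
      intro t
      rw [hu, hue]
      simp only [Polynomial.eval_mul, Polynomial.eval_pow, Polynomial.eval_sub,
        Polynomial.eval_X, Polynomial.eval_C]
      ring
    -- the reversed parametrization
    set w : Fin 3 → Polynomial ℂ :=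
      fun j => Polynomial.C (p₂ j) + Polynomial.C (p₁ j) * Polynomial.X with hw
    set g : Polynomial ℂ := aeval w F with hg
    have hevalg : ∀ t : ℂ, g.eval t = eval (p₂ + t • p₁) F := by
      intro t
      rw [hg, eval_polyeval]
      rw [show (fun j => (w j).eval t) = p₂ + t • p₁ from funext fun i => by
        simp only [hw, Polynomial.eval_add, Polynomial.eval_mul, Polynomial.eval_C,
          Polynomial.eval_X, Pi.add_apply, Pi.smul_apply, smul_eq_mul]
        ring]
    have hgrel : ∀ t : ℂ, t ≠ 0 → g.eval t = e * (1 - r * t) ^ 2 := by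
      intro t ht
      rw [hevalg]
      rw [show p₂ + t • p₁ = t • (p₁ + t⁻¹ • p₂) from funext fun i => by
        simp only [Pi.add_apply, Pi.smul_apply, smul_eq_mul]
        field_simp
        ring]
      rw [eval_smul_hom F hF, ← hevalh, hevalform]
      field_simp
    have hgq : g = Polynomial.C e * (1 - Polynomial.C r * Polynomial.X) ^ 2 := by
      apply Polynomial.eq_of_infinite_eval_eq
      apply Set.Infinite.mono (s := {(0:ℂ)}ᶜ)
      · intro t ht
        simp only [Set.mem_compl_iff, Set.mem_singleton_iff] at ht
        simp only [Set.mem_setOf_eq, Polynomial.eval_mul, Polynomial.eval_pow,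
          Polynomial.eval_sub, Polynomial.eval_one, Polynomial.eval_mul, Polynomial.eval_C,
          Polynomial.eval_X]
        rw [hgrel t ht]
      · exact (Set.finite_singleton 0).infinite_compl
    have hg0 : g.eval 0 = 0 := by
      rw [hevalg, show p₂ + (0:ℂ) • p₁ = p₂ by simp]
      exact hF2
    rw [hgq] at hg0
    simp at hg0
    exact he0 hg0
  -- F vanishes on the plane L = 0
  have hplane : ∀ s t : ℂ, eval (s • p₁ + t • p₂) F = 0 := by
    intro s t
    by_cases hs : s = 0
    · subst hs
      rw [show (0:ℂ) • p₁ + t • p₂ = t • p₂ by simp]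
      rw [eval_smul_hom F hF, hF2, mul_zero]
    · rw [show s • p₁ + t • p₂ = s • (p₁ + (s⁻¹ * t) • p₂) from funext fun i => by
        simp only [Pi.add_apply, Pi.smul_apply, smul_eq_mul]
        field_simp]
      rw [eval_smul_hom F hF, ← hevalh, hmain]
      simp
  -- the substitution killing L
  set w : Fin 3 → MvPolynomial (Fin 3) ℂ :=
    fun j => if j = k then X k - C (c k)⁻¹ * L else X j with hw
  have hψ : aeval w F = 0 := by
    apply MvPolynomial.funext
    intro x
    rw [eval_aeval_mv]
    set y : Fin 3 → ℂ := fun j => eval x (w j) with hy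
    have hyk : φlin y = 0 := by
      rw [hφapp]
      have hyj : ∀ j, y j = x j - (if j = k then (c k)⁻¹ * eval x L else 0) := by
        intro j
        by_cases hjk : j = k
        · subst hjk; simp [hy, hw]
        · simp [hy, hw, hjk]
      have : ∑ j, c j * y j
          = (∑ j, c j * x j) - ∑ j, c j * (if j = k then (c k)⁻¹ * eval x L else 0) := by
        rw [← Finset.sum_sub_distrib]
        apply Finset.sum_congr rfl
        intro j _
        rw [hyj j]; ring
      have h8 : ∑ j, c j * (if j = k then (c k)⁻¹ * eval x L else 0) = eval x L := by
        rw [Finset.sum_eq_single k]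
        · rw [if_pos rfl]; field_simp
        · intro m _ hmk; rw [if_neg hmk, mul_zero]
        · simp
      rw [this, h8, ← heval x, sub_self]
    have hymem : y ∈ Submodule.span ℂ (Set.range ![p₁, p₂]) := by
      rw [hspan]; exact hyk
    rw [Submodule.mem_span_range_iff_exists_fun] at hymem
    obtain ⟨co2, hco2⟩ := hymem
    rw [Fin.sum_univ_two] at hco2
    simp only [Matrix.cons_val_zero, Matrix.cons_val_one, Matrix.head_cons] at hco2
    rw [← hco2]
    rw [hplane]
    simp
  -- conclude divisibility
  rw [← Ideal.mem_span_singleton (α := MvPolynomial (Fin 3) ℂ)]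
  have hcomp : (Ideal.Quotient.mk (Ideal.span {L})).comp
      ((aeval w : MvPolynomial (Fin 3) ℂ →ₐ[ℂ] MvPolynomial (Fin 3) ℂ) :
        MvPolynomial (Fin 3) ℂ →+* MvPolynomial (Fin 3) ℂ)
      = Ideal.Quotient.mk (Ideal.span {L}) := by
    apply MvPolynomial.ringHom_ext
    · intro rr
      simp
    · intro i
      simp only [RingHom.comp_apply, RingHom.coe_coe, aeval_X]
      by_cases hik : i = k
      · rw [hik]
        simp only [hw, if_pos rfl]
        refine Ideal.Quotient.eq.mpr ?_
        exact Ideal.mem_span_singleton.mpr ⟨-C (c k)⁻¹, by ring⟩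
      · simp only [hw]
        rw [if_neg hik]
  have hFim := congrArg (fun f => f F) hcomp
  simp only [RingHom.comp_apply, RingHom.coe_coe] at hFim
  rw [hψ, map_zero] at hFim
  exact Ideal.Quotient.eq_zero_iff_mem.mp hFim.symm
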